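/- Let X be a finite set and let μ, ν be probability distributions on X with ν(x) > 0 whenever μ(x) > 0. Let c > 1 and set δ = ((c-1)/(c+1)) · min{μ(x) : μ(x) > 0}. If ‖μ - ν‖_∞ ≤ δ, then D_KL(μ, ν) ≤ c · ‖μ - ν‖_TV, where ‖μ - ν‖_TV = (1/2)·∑_x |μ(x) - ν(x)|. -/

import Mathlib

open Finset

/-- Kullback-Leibler divergence on a finite set (with convention 0·log(0/0)=0,
since terms with `μ x = 0` vanish). -/
noncomputable def klDiv {X : Type*} [Fintype X] (μ ν : X → ℝ) : ℝ :=
  ∑ x, μ x * Real.log (μ x / ν x)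

/-- Total variation norm of the difference of two vectors. -/
noncomputable def tvDist {X : Type*} [Fintype X] (μ ν : X → ℝ) : ℝ :=
  (1 / 2) * ∑ x, |μ x - ν x|

theorem stmt0 {X : Type*} [Fintype X] (μ ν : X → ℝ)
    (hμ0 : ∀ x, 0 ≤ μ x) (hν0 : ∀ x, 0 ≤ ν x)
    (hμ1 : ∑ x, μ x = 1) (hν1 : ∑ x, ν x = 1)
    (hac : ∀ x, 0 < μ x → 0 < ν x)
    (c : ℝ) (hc : 1 < c)
    (S : Finset X) (hS : ∀ x, x ∈ S ↔ 0 < μ x) (hSne : S.Nonempty)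
    (δ : ℝ) (hδ : δ = (c - 1) / (c + 1) * S.inf' hSne μ)
    (hinf : ∀ x, |μ x - ν x| ≤ δ) :
    klDiv μ ν ≤ c * tvDist μ ν := by
  classical
  have hc1 : (0:ℝ) < c + 1 := by linarith
  have hc1' : (0:ℝ) ≤ (c - 1) / (c + 1) := div_nonneg (by linarith) hc1.le
  have hSsub : S ⊆ Finset.univ := Finset.subset_univ S
  have hμ0' : ∀ x ∉ S, μ x = 0 := by
    intro x hx
    have h : ¬ 0 < μ x := fun h => hx ((hS x).mpr h)
    linarith [hμ0 x]
  have hmle : ∀ x ∈ S, S.inf' hSne μ ≤ μ x := fun x hx => Finset.inf'_le μ hx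
  set A := ∑ x ∈ S, |μ x - ν x| with hA
  set B := ∑ x ∈ Finset.univ \ S, ν x with hB
  -- pointwise key bound on S
  have key : ∀ x ∈ S, μ x * Real.log (μ x / ν x)
      ≤ (μ x - ν x) + (c - 1) / 2 * |μ x - ν x| := by
    intro x hx
    have hμx : 0 < μ x := (hS x).mp hx
    have hνx : 0 < ν x := hac x hμx
    have hd : |μ x - ν x| ≤ δ := hinf x
    have hδμ : δ ≤ (c - 1) / (c + 1) * μ x := by
      rw [hδ]
      exact mul_le_mul_of_nonneg_left (hmle x hx) hc1'
    have h1 : μ x - ν x ≤ δ := le_trans (le_abs_self _) hd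
    have hνlb : 2 * μ x / (c + 1) ≤ ν x := by
      rw [div_le_iff₀ hc1]
      have h2 : μ x - ν x ≤ (c - 1) / (c + 1) * μ x := le_trans h1 hδμ
      have h3 : (μ x - ν x) * (c + 1) ≤ (c - 1) / (c + 1) * μ x * (c + 1) :=
        mul_le_mul_of_nonneg_right h2 hc1.le
      have h4 : (c - 1) / (c + 1) * μ x * (c + 1) = (c - 1) * μ x := by
        field_simp
      nlinarith [h3, h4]
    have hδν : δ ≤ (c - 1) / 2 * ν x := by
      have h5 : (c - 1) / (c + 1) * μ x = (c - 1) / 2 * (2 * μ x / (c + 1)) := by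
        field_simp
      have h6 : (c - 1) / 2 * (2 * μ x / (c + 1)) ≤ (c - 1) / 2 * ν x :=
        mul_le_mul_of_nonneg_left hνlb (by linarith)
      linarith [hδμ, h5 ▸ h6]
    have hlog : Real.log (μ x / ν x) ≤ μ x / ν x - 1 :=
      Real.log_le_sub_one_of_pos (div_pos hμx hνx)
    have h7 : μ x * Real.log (μ x / ν x) ≤ μ x * (μ x / ν x - 1) :=
      mul_le_mul_of_nonneg_left hlog hμx.le
    have h8 : μ x * (μ x / ν x - 1) = (μ x - ν x) + (μ x - ν x)^2 / ν x := by
      field_simp; ring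
    have h9 : (μ x - ν x)^2 / ν x ≤ (c - 1) / 2 * |μ x - ν x| := by
      rw [div_le_iff₀ hνx]
      have h10 : (μ x - ν x)^2 = |μ x - ν x| * |μ x - ν x| := by
        rw [abs_mul_abs_self]; ring
      calc (μ x - ν x)^2 ≤ |μ x - ν x| * δ := by
              rw [h10]; exact mul_le_mul_of_nonneg_left hd (abs_nonneg _)
        _ ≤ |μ x - ν x| * ((c - 1) / 2 * ν x) :=
              mul_le_mul_of_nonneg_left hδν (abs_nonneg _)
        _ = (c - 1) / 2 * |μ x - ν x| * ν x := by ring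
    linarith [h7, h8 ▸ h7, h9]
  -- sums
  have hμS : ∑ x ∈ S, μ x = 1 := by
    rw [← hμ1]
    exact Finset.sum_subset hSsub (fun x _ hx => hμ0' x hx)
  have hνS : B + ∑ x ∈ S, ν x = 1 := by
    rw [hB, ← hν1]
    exact Finset.sum_sdiff hSsub
  have hsumdiff : ∑ x ∈ S, (μ x - ν x) = B := by
    rw [Finset.sum_sub_distrib, hμS]
    linarith
  have hB0 : 0 ≤ B := Finset.sum_nonneg (fun x _ => hν0 x)
  have hBA : B ≤ A := by
    rw [← hsumdiff, hA]
    exact Finset.sum_le_sum (fun x _ => le_abs_self _)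
  have hKLS : klDiv μ ν = ∑ x ∈ S, μ x * Real.log (μ x / ν x) := by
    rw [klDiv]
    refine (Finset.sum_subset hSsub ?_).symm
    intro x _ hx
    rw [hμ0' x hx, zero_mul]
  have hKL : klDiv μ ν ≤ B + (c - 1) / 2 * A := by
    rw [hKLS]
    calc ∑ x ∈ S, μ x * Real.log (μ x / ν x)
        ≤ ∑ x ∈ S, ((μ x - ν x) + (c - 1) / 2 * |μ x - ν x|) :=
          Finset.sum_le_sum key
      _ = (∑ x ∈ S, (μ x - ν x)) + (c - 1) / 2 * A := by
          rw [Finset.sum_add_distrib, ← Finset.mul_sum]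
      _ = B + (c - 1) / 2 * A := by rw [hsumdiff]
  have hTV : tvDist μ ν = (1 / 2) * (A + B) := by
    rw [tvDist]
    congr 1
    have h11 : ∑ x ∈ Finset.univ \ S, |μ x - ν x| = B := by
      rw [hB]
      refine Finset.sum_congr rfl (fun x hx => ?_)
      rw [hμ0' x (Finset.mem_sdiff.mp hx).2, zero_sub, abs_neg, abs_of_nonneg (hν0 x)]
    have h12 := Finset.sum_sdiff (f := fun x => |μ x - ν x|) hSsub
    rw [h11] at h12
    linarith [h12]
  rw [hTV]
  nlinarith [hKL, hBA, hB0, hc]
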